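/- Let p > 2 be a prime, a₀ ≥ 0, and R = (ℤ/p^{a₀+1}ℤ)[t]/(f(t)) with f monic of degree λ irreducible mod p. For μ ∈ pR and any l ≥ 0, one has (1 + μ)^{p^l} = 1 if and only if p^l μ = 0. -/

import Mathlib

private lemma key_step {R : Type*} [CommRing R] {p : ℕ} (hp : p.Prime) (hodd : p ≠ 2)
    (hnil : IsNilpotent (p : R)) {μ : R} (hμ : ∃ ν, μ = (p : R) * ν) :
    ∃ ε : R, IsUnit ε ∧ (1 + μ) ^ p = 1 + (p : R) * μ * ε := by
  obtain ⟨ν, rfl⟩ := hμ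
  set μ : R := (p : R) * ν with hμdef
  have h3 : 3 ≤ p := by
    rcases hp.two_le.lt_or_eq with h | h
    · omega
    · omega
  obtain ⟨m, hm⟩ : ∃ m, p = m + 3 := ⟨p - 3, by omega⟩
  have hdvd : ((p : R) ^ 2 * μ) ∣ ((1 + μ) ^ p - 1 - (p : R) * μ) := by
    rw [add_comm, add_pow]
    have hsplit : (Finset.range (p + 1)).sum (fun k => μ ^ k * 1 ^ (p - k) * (p.choose k : R))
        = (Finset.range (m + 2)).sum
            (fun k => μ ^ (k + 2) * 1 ^ (p - (k + 2)) * (p.choose (k + 2) : R))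
          + μ ^ 1 * 1 ^ (p - 1) * (p.choose 1 : R)
          + μ ^ 0 * 1 ^ (p - 0) * (p.choose 0 : R) := by
      rw [show p + 1 = (m + 3) + 1 from by omega, Finset.sum_range_succ',
        Finset.sum_range_succ']
    rw [hsplit, Nat.choose_one_right, Nat.choose_zero_right]
    have : (Finset.range (m + 2)).sum
        (fun k => μ ^ (k + 2) * 1 ^ (p - (k + 2)) * (p.choose (k + 2) : R))
        + μ ^ 1 * 1 ^ (p - 1) * (p : R) + μ ^ 0 * 1 ^ (p - 0) * ((1 : ℕ) : R) - 1 - (p : R) * μ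
        = (Finset.range (m + 2)).sum
        (fun k => μ ^ (k + 2) * 1 ^ (p - (k + 2)) * (p.choose (k + 2) : R)) := by
      push_cast; ring
    rw [this]
    apply Finset.dvd_sum
    intro k hk
    simp only [Finset.mem_range] at hk
    rcases lt_or_ge (k + 2) p with hlt | hge
    · -- p divides the binomial coefficient
      obtain ⟨c, hc⟩ := hp.dvd_choose_self (by omega) hlt
      refine ⟨ν * μ ^ k * (c : R) * 1 ^ (p - (k + 2)), ?_⟩
      rw [hc]
      push_cast
      rw [hμdef]
      ring
    · -- k + 2 = p, term is μ^p, and μ^2 = p^2 ν^2 contributes p^2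
      have hkp : k + 2 = p := by omega
      have hk1 : 1 ≤ k := by omega
      obtain ⟨j, hj⟩ : ∃ j, k = j + 1 := ⟨k - 1, by omega⟩
      refine ⟨ν * ν * μ ^ j * 1 ^ (p - (k + 2)) * (p.choose (k + 2) : R), ?_⟩
      rw [hj]
      rw [hμdef]
      ring
  obtain ⟨s, hs⟩ := hdvd
  refine ⟨1 + (p : R) * s, ?_, ?_⟩
  · exact IsNilpotent.isUnit_one_add ((Commute.all _ s).isNilpotent_mul_right hnil)
  · have : (1 + μ) ^ p = 1 + (p : R) * μ + (p : R) ^ 2 * μ * s := by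
      rw [← hs]; ring
    rw [this]; ring

private lemma key_iter {R : Type*} [CommRing R] {p : ℕ} (hp : p.Prime) (hodd : p ≠ 2)
    (hnil : IsNilpotent (p : R)) {μ : R} (hμ : ∃ ν, μ = (p : R) * ν) (l : ℕ) :
    ∃ ε : R, IsUnit ε ∧ (1 + μ) ^ p ^ l = 1 + (p : R) ^ l * μ * ε := by
  induction l with
  | zero => exact ⟨1, isUnit_one, by simp⟩
  | succ l ih =>
    obtain ⟨ε, hε, heq⟩ := ih
    obtain ⟨ν, hν⟩ := hμ
    have hμ' : ∃ ν', (p : R) ^ l * μ * ε = (p : R) * ν' :=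
      ⟨(p : R) ^ l * ν * ε, by rw [hν]; ring⟩
    obtain ⟨ε', hε', heq'⟩ := key_step hp hodd hnil hμ'
    refine ⟨ε * ε', hε.mul hε', ?_⟩
    rw [pow_succ, pow_mul, heq, heq']
    ring

/-- The ring `R = (ℤ/p^{a₀+1}ℤ)[t]/(f(t))`. -/
abbrev FuchsR (p a0 : ℕ) (f : Polynomial (ZMod (p ^ (a0 + 1)))) :=
  Polynomial (ZMod (p ^ (a0 + 1))) ⧸ Ideal.span {f}

/-- Let `p > 2` be prime, `R = (ℤ/p^{a₀+1}ℤ)[t]/(f(t))` with `f` monic of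
degree `λ` irreducible mod `p`. For `μ ∈ pR` and `l ≥ 0`,
`(1 + μ)^{p^l} = 1 ↔ p^l μ = 0`. -/
theorem stmt14 (p : ℕ) (hp : p.Prime) (hodd : p ≠ 2) (a0 lam : ℕ) (hlam : 1 ≤ lam)
    (f : Polynomial (ZMod (p ^ (a0 + 1)))) (hf : f.Monic) (hdeg : f.natDegree = lam)
    (hirr : Irreducible
      (f.map (ZMod.castHom (dvd_pow_self p (Nat.succ_ne_zero a0)) (ZMod p))))
    (μ : FuchsR p a0 f) (hμ : μ ∈ Ideal.span {(p : FuchsR p a0 f)}) (l : ℕ) :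
    (1 + μ) ^ p ^ l = 1 ↔ (p : FuchsR p a0 f) ^ l * μ = 0 := by
  have hnil : IsNilpotent (p : FuchsR p a0 f) := by
    refine ⟨a0 + 1, ?_⟩
    have h1 : (p : FuchsR p a0 f) =
        algebraMap (ZMod (p ^ (a0 + 1))) (FuchsR p a0 f) (p : ZMod (p ^ (a0 + 1))) := by
      rw [map_natCast]
    rw [h1, ← map_pow]
    have h2 : ((p : ZMod (p ^ (a0 + 1))) ^ (a0 + 1)) = 0 := by
      rw [← Nat.cast_pow, ZMod.natCast_self]
    rw [h2, map_zero]
  rw [Ideal.mem_span_singleton] at hμ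
  obtain ⟨ν, hν⟩ := hμ
  obtain ⟨ε, hε, heq⟩ := key_iter hp hodd hnil ⟨ν, hν⟩ l
  rw [heq]
  constructor
  · intro h
    have h0 : (p : FuchsR p a0 f) ^ l * μ * ε = 0 := by
      rwa [add_eq_left] at h
    exact (hε.mul_left_eq_zero).mp h0
  · intro h
    rw [h, zero_mul, add_zero]
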